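/- arXiv:1209.5141 — 2 statements merged into one kernel-verified Lean document; each statement's English description precedes it below -/
import Mathlib

section
/- (Lemma 1 of the paper.) Let γ > 0 and let B₀ = γ⁻¹I and B_{j+1} be BFGS updates with pairs (s_ℓ, y_ℓ) satisfying y_ℓᵀ s_ℓ ≥ δ > 0 for all ℓ. Let G be symmetric positive definite with all eigenvalues ≥ θ_min > 0, and set u = B_j s_j / √(s_jᵀ B_j s_j) and C = B_j + G. Then 1 - uᵀ C⁻¹ u ≥ θ_min / (γ⁻¹ + (Σ_{ℓ=0}^{j-1} ‖y_ℓ‖²)/δ + θ_min) > 0. -/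
open Matrix

lemma symmDot {n : ℕ} {A : Matrix (Fin n) (Fin n) ℝ} (hsym : Aᵀ = A)
    (u v : Fin n → ℝ) : v ⬝ᵥ A *ᵥ u = u ⬝ᵥ A *ᵥ v := by
  rw [Matrix.dotProduct_mulVec, ← Matrix.mulVec_transpose, hsym, dotProduct_comm]

lemma csPSD {n : ℕ} {A : Matrix (Fin n) (Fin n) ℝ} (hsym : Aᵀ = A)
    (hpsd : ∀ x, 0 ≤ x ⬝ᵥ A *ᵥ x) (u v : Fin n → ℝ) :
    (u ⬝ᵥ A *ᵥ v) ^ 2 ≤ (u ⬝ᵥ A *ᵥ u) * (v ⬝ᵥ A *ᵥ v) := by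
  have key : ∀ t : ℝ, 0 ≤ (v ⬝ᵥ A *ᵥ v) * (t * t) + (2 * (u ⬝ᵥ A *ᵥ v)) * t + (u ⬝ᵥ A *ᵥ u) := by
    intro t
    have h := hpsd (u + t • v)
    have hsw := symmDot hsym u v
    simp only [Matrix.mulVec_add, Matrix.mulVec_smul, dotProduct_add,
      add_dotProduct, smul_dotProduct, dotProduct_smul,
      smul_eq_mul] at h
    rw [hsw] at h
    nlinarith [h]
  have := discrim_le_zero key
  simp only [discrim] at this
  nlinarith [this]

lemma dotSelf_nonneg {n : ℕ} (x : Fin n → ℝ) : 0 ≤ x ⬝ᵥ x :=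
  Finset.sum_nonneg fun i _ => mul_self_nonneg (x i)

lemma vmvMulVec {n : ℕ} (a b w : Fin n → ℝ) :
    vecMulVec a b *ᵥ w = (b ⬝ᵥ w) • a := by
  ext i
  simp [vecMulVec_apply, mulVec, dotProduct, Finset.mul_sum, mul_comm, mul_assoc, mul_left_comm]

lemma gBound {n : ℕ} (θmin : ℝ) (G : Matrix (Fin n) (Fin n) ℝ) (hG : G.IsHermitian)
    (heig : ∀ i, θmin ≤ hG.eigenvalues i) (x : Fin n → ℝ) :
    θmin * (x ⬝ᵥ x) ≤ x ⬝ᵥ G *ᵥ x := by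
  set U : Matrix (Fin n) (Fin n) ℝ := (hG.eigenvectorUnitary : Matrix (Fin n) (Fin n) ℝ) with hUdef
  have hps : (G - θmin • 1).PosSemidef := by
    have hU : U * star U = 1 := Unitary.mul_star_self_of_mem hG.eigenvectorUnitary.2
    have hspec : G = U * diagonal (RCLike.ofReal ∘ hG.eigenvalues) * star U := by
      conv_lhs => rw [hG.spectral_theorem]
      rw [Unitary.conjStarAlgAut_apply]
    have hD : diagonal (RCLike.ofReal ∘ hG.eigenvalues) - θmin • (1 : Matrix (Fin n) (Fin n) ℝ)
        = diagonal (fun i => hG.eigenvalues i - θmin) := by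
      ext i k
      rcases eq_or_ne i k with h | h
      · subst h; simp [Matrix.one_apply_eq]
      · simp [Matrix.diagonal_apply_ne _ h, Matrix.one_apply_ne h]
    have heq : G - θmin • 1 = U * diagonal (fun i => hG.eigenvalues i - θmin) * star U := by
      calc G - θmin • 1
          = U * diagonal (RCLike.ofReal ∘ hG.eigenvalues) * star U
            - U * (θmin • 1) * star U := by
            rw [← hspec]
            congr 1
            rw [Matrix.mul_smul, Matrix.smul_mul, Matrix.mul_one, hU]
        _ = U * (diagonal (RCLike.ofReal ∘ hG.eigenvalues) - θmin • 1) * star U := by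
            rw [Matrix.mul_sub, Matrix.sub_mul]
        _ = _ := by rw [hD]
    rw [heq, Matrix.star_eq_conjTranspose]
    exact (posSemidef_diagonal_iff.mpr fun i => by simpa using sub_nonneg.mpr (heig i)).mul_mul_conjTranspose_same U
  have h2 := hps.dotProduct_mulVec_nonneg x
  simp only [Matrix.sub_mulVec, Matrix.smul_mulVec, Matrix.one_mulVec,
    dotProduct_sub, dotProduct_smul, smul_eq_mul, star_trivial] at h2
  linarith
theorem lemma1_shifted_lbfgs {n j : ℕ} (γ δ θmin : ℝ) (hγ : 0 < γ) (hδ : 0 < δ)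
    (hθ : 0 < θmin)
    (s y : ℕ → (Fin n → ℝ)) (B : ℕ → Matrix (Fin n) (Fin n) ℝ)
    (hB0 : B 0 = γ⁻¹ • (1 : Matrix (Fin n) (Fin n) ℝ))
    (hrec : ∀ ℓ < j, B (ℓ + 1) =
      B ℓ - (1 / (s ℓ ⬝ᵥ B ℓ *ᵥ s ℓ)) • (B ℓ * vecMulVec (s ℓ) (s ℓ) * B ℓ)
          + (1 / (y ℓ ⬝ᵥ s ℓ)) • vecMulVec (y ℓ) (y ℓ))
    (hys : ∀ ℓ ≤ j, δ ≤ y ℓ ⬝ᵥ s ℓ) (hs : ∀ ℓ ≤ j, s ℓ ≠ 0)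
    (G : Matrix (Fin n) (Fin n) ℝ) (hG : G.IsHermitian)
    (heig : ∀ i, θmin ≤ hG.eigenvalues i) :
    θmin / (γ⁻¹ + (∑ ℓ ∈ Finset.range j, y ℓ ⬝ᵥ y ℓ) / δ + θmin) ≤
      1 - ((Real.sqrt (s j ⬝ᵥ B j *ᵥ s j))⁻¹ • (B j *ᵥ s j)) ⬝ᵥ
            (B j + G)⁻¹ *ᵥ ((Real.sqrt (s j ⬝ᵥ B j *ᵥ s j))⁻¹ • (B j *ᵥ s j)) ∧
    0 < θmin / (γ⁻¹ + (∑ ℓ ∈ Finset.range j, y ℓ ⬝ᵥ y ℓ) / δ + θmin) := by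
  -- basic facts about the dot-product Cauchy-Schwarz
  have hone : (1 : Matrix (Fin n) (Fin n) ℝ)ᵀ = 1 := Matrix.transpose_one
  have honepsd : ∀ x : Fin n → ℝ, 0 ≤ x ⬝ᵥ (1 : Matrix (Fin n) (Fin n) ℝ) *ᵥ x := by
    intro x; rw [Matrix.one_mulVec]; exact dotSelf_nonneg x
  have csdot : ∀ u v : Fin n → ℝ, (u ⬝ᵥ v) ^ 2 ≤ (u ⬝ᵥ u) * (v ⬝ᵥ v) := by
    intro u v
    have := csPSD hone honepsd u v
    simpa [Matrix.one_mulVec] using this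
  -- the key induction on the BFGS matrices
  have key : ∀ ℓ, ℓ ≤ j → (B ℓ)ᵀ = B ℓ ∧ (∀ x, 0 ≤ x ⬝ᵥ B ℓ *ᵥ x) ∧
      (∀ x, x ⬝ᵥ B ℓ *ᵥ x ≤
        (γ⁻¹ + (∑ k ∈ Finset.range ℓ, y k ⬝ᵥ y k) / δ) * (x ⬝ᵥ x)) := by
    intro ℓ
    induction ℓ with
    | zero =>
      intro _
      refine ⟨by rw [hB0]; simp, ?_, ?_⟩
      · intro x
        rw [hB0]
        simp only [Matrix.smul_mulVec, Matrix.one_mulVec, dotProduct_smul,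
          smul_eq_mul]
        exact mul_nonneg (inv_nonneg.mpr hγ.le) (dotSelf_nonneg x)
      · intro x
        rw [hB0]
        simp only [Matrix.smul_mulVec, Matrix.one_mulVec, dotProduct_smul,
          smul_eq_mul, Finset.range_zero, Finset.sum_empty, zero_div, add_zero]
        exact le_refl _
    | succ ℓ ih =>
      intro hl
      have hlj : ℓ < j := hl
      obtain ⟨hsym, hpsd, hbd⟩ := ih (le_of_lt hlj)
      have hysl : δ ≤ y ℓ ⬝ᵥ s ℓ := hys ℓ (le_of_lt hlj)
      have hyspos : 0 < y ℓ ⬝ᵥ s ℓ := lt_of_lt_of_le hδ hysl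
      -- quadratic form of the update
      have hquad : ∀ x, x ⬝ᵥ B (ℓ + 1) *ᵥ x =
          x ⬝ᵥ B ℓ *ᵥ x - (1 / (s ℓ ⬝ᵥ B ℓ *ᵥ s ℓ)) * (s ℓ ⬝ᵥ B ℓ *ᵥ x) ^ 2
            + (1 / (y ℓ ⬝ᵥ s ℓ)) * (y ℓ ⬝ᵥ x) ^ 2 := by
        intro x
        rw [hrec ℓ hlj]
        have h1 : (B ℓ * vecMulVec (s ℓ) (s ℓ) * B ℓ) *ᵥ x =
            (s ℓ ⬝ᵥ B ℓ *ᵥ x) • (B ℓ *ᵥ s ℓ) := by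
          rw [← Matrix.mulVec_mulVec, ← Matrix.mulVec_mulVec, vmvMulVec,
            Matrix.mulVec_smul]
        have h2 : x ⬝ᵥ B ℓ *ᵥ s ℓ = s ℓ ⬝ᵥ B ℓ *ᵥ x := symmDot hsym (s ℓ) x
        simp only [Matrix.add_mulVec, Matrix.sub_mulVec, Matrix.smul_mulVec,
          dotProduct_add, dotProduct_sub, dotProduct_smul,
          smul_eq_mul, h1, vmvMulVec, dotProduct_smul]
        rw [h2, dotProduct_comm x (y ℓ)]
        ring
      have hsBs : 0 ≤ s ℓ ⬝ᵥ B ℓ *ᵥ s ℓ := hpsd (s ℓ)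
      refine ⟨?_, ?_, ?_⟩
      · -- symmetry
        rw [hrec ℓ hlj]
        have hv : (vecMulVec (s ℓ) (s ℓ))ᵀ = vecMulVec (s ℓ) (s ℓ) := by
          ext i k; simp [vecMulVec_apply, mul_comm]
        have hv' : (vecMulVec (y ℓ) (y ℓ))ᵀ = vecMulVec (y ℓ) (y ℓ) := by
          ext i k; simp [vecMulVec_apply, mul_comm]
        simp only [Matrix.transpose_add, Matrix.transpose_sub, Matrix.transpose_smul,
          Matrix.transpose_mul, hv, hv', hsym]
        rw [Matrix.mul_assoc]
      · -- positive semidefinite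
        intro x
        rw [hquad x]
        have hterm : (1 / (s ℓ ⬝ᵥ B ℓ *ᵥ s ℓ)) * (s ℓ ⬝ᵥ B ℓ *ᵥ x) ^ 2 ≤ x ⬝ᵥ B ℓ *ᵥ x := by
          rcases eq_or_lt_of_le hsBs with h0 | h0
          · rw [← h0]; simp [hpsd x]
          · rw [div_mul_eq_mul_div, one_mul, div_le_iff₀ h0]
            calc (s ℓ ⬝ᵥ B ℓ *ᵥ x) ^ 2 ≤ (s ℓ ⬝ᵥ B ℓ *ᵥ s ℓ) * (x ⬝ᵥ B ℓ *ᵥ x) :=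
                  csPSD hsym hpsd (s ℓ) x
              _ = (x ⬝ᵥ B ℓ *ᵥ x) * (s ℓ ⬝ᵥ B ℓ *ᵥ s ℓ) := mul_comm _ _
        have h3 : 0 ≤ (1 / (y ℓ ⬝ᵥ s ℓ)) * (y ℓ ⬝ᵥ x) ^ 2 :=
          mul_nonneg (by positivity) (sq_nonneg _)
        linarith
      · -- upper bound
        intro x
        rw [hquad x]
        have h1 : 0 ≤ (1 / (s ℓ ⬝ᵥ B ℓ *ᵥ s ℓ)) * (s ℓ ⬝ᵥ B ℓ *ᵥ x) ^ 2 :=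
          mul_nonneg (by positivity) (sq_nonneg _)
        have h2 : (1 / (y ℓ ⬝ᵥ s ℓ)) * (y ℓ ⬝ᵥ x) ^ 2 ≤ (1 / δ) * ((y ℓ ⬝ᵥ y ℓ) * (x ⬝ᵥ x)) := by
          have hle : (1 / (y ℓ ⬝ᵥ s ℓ)) ≤ 1 / δ := one_div_le_one_div_of_le hδ hysl
          have hcs := csdot (y ℓ) x
          have h0 : (0:ℝ) ≤ (1 / (y ℓ ⬝ᵥ s ℓ)) := by positivity
          calc (1 / (y ℓ ⬝ᵥ s ℓ)) * (y ℓ ⬝ᵥ x) ^ 2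
              ≤ (1 / δ) * (y ℓ ⬝ᵥ x) ^ 2 := mul_le_mul_of_nonneg_right hle (sq_nonneg _)
            _ ≤ (1 / δ) * ((y ℓ ⬝ᵥ y ℓ) * (x ⬝ᵥ x)) := by
                apply mul_le_mul_of_nonneg_left hcs (by positivity)
        have h3 := hbd x
        rw [Finset.sum_range_succ]
        have hxx : 0 ≤ x ⬝ᵥ x := dotSelf_nonneg x
        have : (γ⁻¹ + (∑ k ∈ Finset.range ℓ, y k ⬝ᵥ y k + y ℓ ⬝ᵥ y ℓ) / δ) * (x ⬝ᵥ x) =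
            (γ⁻¹ + (∑ k ∈ Finset.range ℓ, y k ⬝ᵥ y k) / δ) * (x ⬝ᵥ x)
              + (1 / δ) * ((y ℓ ⬝ᵥ y ℓ) * (x ⬝ᵥ x)) := by
          field_simp; ring
        rw [this]
        linarith
  obtain ⟨hsym, hpsd, hbd⟩ := key j le_rfl
  -- notation
  set Ssum : ℝ := ∑ ℓ ∈ Finset.range j, y ℓ ⬝ᵥ y ℓ with hSsum
  have hSnn : 0 ≤ Ssum := Finset.sum_nonneg fun k _ => dotSelf_nonneg (y k)
  set M : ℝ := γ⁻¹ + Ssum / δ with hMdef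
  have hM : 0 < M := by positivity
  have hd : 0 < M + θmin := by linarith
  have hrhs : 0 < θmin / (M + θmin) := div_pos hθ hd
  have hrhs1 : θmin / (M + θmin) < 1 := by
    rw [div_lt_one hd]; linarith
  refine ⟨?_, hrhs⟩
  -- the matrix C
  set C : Matrix (Fin n) (Fin n) ℝ := B j + G with hCdef
  have hGq : ∀ x, θmin * (x ⬝ᵥ x) ≤ x ⬝ᵥ G *ᵥ x := gBound θmin G hG heig
  have hCq : ∀ x, x ⬝ᵥ C *ᵥ x = x ⬝ᵥ B j *ᵥ x + x ⬝ᵥ G *ᵥ x := by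
    intro x; rw [hCdef, Matrix.add_mulVec, dotProduct_add]
  have hCpd : C.PosDef := by
    refine Matrix.PosDef.of_dotProduct_mulVec_pos ?_ ?_
    · rw [hCdef]
      have hBh : (B j).IsHermitian := by
        rw [Matrix.IsHermitian, Matrix.conjTranspose_eq_transpose_of_trivial, hsym]
      exact hBh.add hG
    · intro x hx
      have hxx : 0 < x ⬝ᵥ x := by
        have h := dotSelf_nonneg x
        rcases eq_or_lt_of_le h with h0 | h0
        · exfalso; exact hx ((dotProduct_self_eq_zero).mp h0.symm)
        · exact h0
      have := hGq x
      have := hpsd x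
      simp only [star_trivial]
      rw [hCq x]
      nlinarith
  have hCinv : C * C⁻¹ = 1 := Matrix.mul_nonsing_inv C hCpd.det_pos.ne'.isUnit
  -- set up the vectors
  set a : ℝ := s j ⬝ᵥ B j *ᵥ s j with hadef
  set α : ℝ := (Real.sqrt a)⁻¹ with hαdef
  set u : Fin n → ℝ := α • (B j *ᵥ s j) with hudef
  set v : Fin n → ℝ := C⁻¹ *ᵥ u with hvdef
  have hgoal : u ⬝ᵥ C⁻¹ *ᵥ u = u ⬝ᵥ v := rfl
  have huCv : u = C *ᵥ v := by
    rw [hvdef, Matrix.mulVec_mulVec, hCinv, Matrix.one_mulVec]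
  set t : ℝ := u ⬝ᵥ v with htdef
  have ht2 : t = v ⬝ᵥ C *ᵥ v := by
    rw [htdef]
    conv_lhs => rw [huCv]
    rw [dotProduct_comm]
  show θmin / (M + θmin) ≤ 1 - t
  rcases le_or_gt t 0 with hts | hts
  · linarith
  -- now t > 0, so a > 0
  have ha0 : 0 ≤ a := hpsd (s j)
  have hapos : 0 < a := by
    rcases eq_or_lt_of_le ha0 with h0 | h0
    · exfalso
      have : α = 0 := by rw [hαdef, ← h0, Real.sqrt_zero, _root_.inv_zero]
      have hu0 : u = 0 := by rw [hudef, this, zero_smul]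
      rw [htdef, hu0] at hts
      simp at hts
    · exact h0
  have hα2 : α ^ 2 * a = 1 := by
    rw [hαdef, ← Real.sqrt_inv, Real.sq_sqrt (inv_nonneg.mpr ha0)]
    exact inv_mul_cancel₀ (ne_of_gt hapos)
  have hαnn : 0 ≤ α := by rw [hαdef]; positivity
  -- t = vBv + vGv
  have htsum : t = v ⬝ᵥ B j *ᵥ v + v ⬝ᵥ G *ᵥ v := by rw [ht2, hCq]
  -- t² ≤ vBv
  have htv : t = α * (s j ⬝ᵥ B j *ᵥ v) := by
    rw [htdef, hudef, smul_dotProduct, smul_eq_mul]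
    congr 1
    rw [dotProduct_comm]
    exact symmDot hsym (s j) v
  have hcsB := csPSD hsym hpsd (s j) v
  have ht2le : t ^ 2 ≤ v ⬝ᵥ B j *ᵥ v := by
    have hvBv : 0 ≤ v ⬝ᵥ B j *ᵥ v := hpsd v
    calc t ^ 2 = α ^ 2 * (s j ⬝ᵥ B j *ᵥ v) ^ 2 := by rw [htv]; ring
      _ ≤ α ^ 2 * (a * (v ⬝ᵥ B j *ᵥ v)) := by
          apply mul_le_mul_of_nonneg_left _ (sq_nonneg α)
          exact hcsB
      _ = (α ^ 2 * a) * (v ⬝ᵥ B j *ᵥ v) := by ring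
      _ = v ⬝ᵥ B j *ᵥ v := by rw [hα2, one_mul]
  have hvBvM : v ⬝ᵥ B j *ᵥ v ≤ M * (v ⬝ᵥ v) := hbd v
  have hvGv : θmin * (v ⬝ᵥ v) ≤ v ⬝ᵥ G *ᵥ v := hGq v
  have hvv : 0 ≤ v ⬝ᵥ v := dotSelf_nonneg v
  clear_value Ssum M C a α u v t
  -- combine: M * t ≥ t² * (M + θmin)
  have hcomb : t ^ 2 * (M + θmin) ≤ M * t := by
    have h1 : M * t = M * (v ⬝ᵥ B j *ᵥ v) + M * (v ⬝ᵥ G *ᵥ v) := by rw [htsum]; ring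
    nlinarith [mul_le_mul_of_nonneg_left ht2le hM.le, mul_le_mul_of_nonneg_left hvGv hM.le,
      mul_le_mul_of_nonneg_left hvBvM hθ.le, mul_le_mul_of_nonneg_left ht2le hθ.le]
  have htle : t * (M + θmin) ≤ M := by
    have h' : t * (t * (M + θmin)) ≤ t * M := by
      calc t * (t * (M + θmin)) = t ^ 2 * (M + θmin) := by ring
        _ ≤ M * t := hcomb
        _ = t * M := mul_comm M t
    exact le_of_mul_le_mul_left h' hts
  rw [div_le_iff₀ hd]
  nlinarith [htle]
end

section
/- Let B be symmetric positive definite, s ∈ ℝⁿ with s ≠ 0, and y ∈ ℝⁿ with yᵀs > 0. Then the BFGS update B' = B - (1/(sᵀBs)) B s sᵀ B + (1/(yᵀs)) y yᵀ is symmetric positive definite. -/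
open Matrix

lemma vecMulVec_mulVec' {n : ℕ} (u v x : Fin n → ℝ) :
    vecMulVec u v *ᵥ x = (v ⬝ᵥ x) • u := by
  funext i
  simp [vecMulVec_apply, mulVec, dotProduct, Finset.mul_sum, mul_comm, mul_assoc, mul_left_comm]

theorem bfgs_update_posDef {n : ℕ} (B : Matrix (Fin n) (Fin n) ℝ)
    (hB : B.PosDef) (s y : Fin n → ℝ) (hs : s ≠ 0) (hys : 0 < y ⬝ᵥ s) :
    (B - (1 / (s ⬝ᵥ B *ᵥ s)) • (B * vecMulVec s s * B)
       + (1 / (y ⬝ᵥ s)) • vecMulVec y y).PosDef := by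
  have hBs : Bᵀ = B := by
    have := hB.isHermitian
    simpa [Matrix.IsHermitian, conjTranspose_eq_transpose_of_trivial] using this
  have hsymm : ∀ u v : Fin n → ℝ, u ⬝ᵥ B *ᵥ v = v ⬝ᵥ B *ᵥ u := by
    intro u v
    rw [dotProduct_mulVec, ← hBs, vecMul_transpose, dotProduct_comm, hBs]
  have hc : 0 < s ⬝ᵥ B *ᵥ s := by simpa using hB.dotProduct_mulVec_pos hs
  set c := s ⬝ᵥ B *ᵥ s with hcdef
  set e := y ⬝ᵥ s with hedef
  have hc0 : c ≠ 0 := ne_of_gt hc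
  have he0 : e ≠ 0 := ne_of_gt hys
  have hq : ∀ x : Fin n → ℝ,
      x ⬝ᵥ (B - (1 / c) • (B * vecMulVec s s * B) + (1 / e) • vecMulVec y y) *ᵥ x
        = x ⬝ᵥ B *ᵥ x - (x ⬝ᵥ B *ᵥ s) * (x ⬝ᵥ B *ᵥ s) / c + (y ⬝ᵥ x) * (y ⬝ᵥ x) / e := by
    intro x
    have h1 : (B * vecMulVec s s * B) *ᵥ x = (s ⬝ᵥ B *ᵥ x) • (B *ᵥ s) := by
      rw [← mulVec_mulVec, ← mulVec_mulVec, vecMulVec_mulVec', mulVec_smul]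
    rw [add_mulVec, sub_mulVec, smul_mulVec, smul_mulVec, h1, vecMulVec_mulVec']
    simp only [dotProduct_add, dotProduct_sub, dotProduct_smul, smul_eq_mul]
    rw [hsymm s x, dotProduct_comm x y]
    field_simp
  refine posDef_iff_dotProduct_mulVec.mpr ⟨?_, ?_⟩
  · have hvt : ∀ u v : Fin n → ℝ, (vecMulVec u v)ᵀ = vecMulVec v u := by
      intro u v
      ext i j
      simp [vecMulVec_apply, mul_comm]
    show _ᴴ = _
    rw [conjTranspose_eq_transpose_of_trivial, transpose_add, transpose_sub, transpose_smul,
      transpose_smul, transpose_mul, transpose_mul, hvt, hvt, hBs, Matrix.mul_assoc]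
  · intro x hx
    have hx' : (x : Fin n → ℝ) ≠ 0 := hx
    simp only [star_trivial]
    rw [hq x]
    set a := x ⬝ᵥ B *ᵥ x with hadef
    set b := x ⬝ᵥ B *ᵥ s with hbdef
    set d := y ⬝ᵥ x with hddef
    have ha : 0 < a := by simpa using hB.dotProduct_mulVec_pos hx'
    by_cases hz : x - (b / c) • s = 0
    · have ht : x = (b / c) • s := sub_eq_zero.mp hz
      have htne : b / c ≠ 0 := by
        intro h0
        exact hx' (by rw [ht, h0, zero_smul])
      have ha' : a = (b / c) * (b / c) * c := by
        rw [hadef, ht, smul_dotProduct, mulVec_smul, dotProduct_smul]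
        simp only [smul_eq_mul, ← hcdef]
        ring
      have hb' : b = (b / c) * c := (div_mul_cancel₀ b hc0).symm
      have hd' : d = (b / c) * e := by
        rw [hddef, ht, dotProduct_smul, smul_eq_mul, ← hedef]
      have hb2 : b * b / c = (b / c) * (b / c) * c := by
        field_simp
      have hd2 : d * d / e = (b / c) * (b / c) * e := by
        rw [hd']; field_simp
      rw [ha', hb2, hd2]
      have := mul_pos (mul_self_pos.mpr htne) hys
      linarith
    · have hzpos : 0 < (x - (b / c) • s) ⬝ᵥ B *ᵥ (x - (b / c) • s) := by simpa using hB.dotProduct_mulVec_pos hz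
      have hexp : (x - (b / c) • s) ⬝ᵥ B *ᵥ (x - (b / c) • s) = a - b * b / c := by
        simp only [mulVec_sub, mulVec_smul, sub_dotProduct, dotProduct_sub, dotProduct_smul,
          smul_dotProduct, smul_eq_mul]
        rw [hsymm s x]
        simp only [← hadef, ← hbdef, ← hcdef]
        field_simp
        ring
      have h1 : 0 < a - b * b / c := hexp ▸ hzpos
      have h2 : 0 ≤ d * d / e := div_nonneg (mul_self_nonneg d) hys.le
      linarith
end
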